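/- Suppose the n rows of the instrument matrix W are i.i.d. and independent of (X, u), where X contains an intercept column. Then under the null hypothesis θ = θ_0, the statistic AR(W, X, ũ) = ũ' M_X W (W' M_X Σ̃_u M_X W)^{-1} W' M_X ũ, with ũ = M_X(y − Yθ_0) and Σ̃_u = diag(ũ_1^2,...,ũ_n^2), has the same distribution as AR(W_π, X, ũ) for any fixed permutation π of the rows of W. Consequently the randomization test φ_n^{PAR_1} based on permuting rows of W has exact size: E[φ_n^{PAR_1}] = α for every α ∈ (0,1). -/

import Mathlib

open Finset Matrix MeasureTheory ProbabilityTheory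

/-- Annihilator (residual-maker) matrix `M_X = I - X(X'X)⁻¹X'`. -/
noncomputable def projPerp {n p : ℕ} (X : Matrix (Fin n) (Fin p) ℝ) :
    Matrix (Fin n) (Fin n) ℝ :=
  1 - X * (Xᵀ * X)⁻¹ * Xᵀ

/-- Heteroskedasticity-robust Anderson–Rubin statistic
`AR(W, X, ũ) = ũ' M_X W (W' M_X Σ̃_u M_X W)⁻¹ W' M_X ũ` with `ũ = M_X u` and
`Σ̃_u = diag(ũ₁²,…,ũₙ²)`. -/
noncomputable def ARstat {n k p : ℕ} (W : Matrix (Fin n) (Fin k) ℝ)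
    (X : Matrix (Fin n) (Fin p) ℝ) (u : Fin n → ℝ) : ℝ :=
  let M := projPerp X
  let ut := M.mulVec u
  let B := Wᵀ * M
  let v := B.mulVec ut
  v ⬝ᵥ ((B * Matrix.diagonal (fun i => (ut i) ^ 2) * Bᵀ)⁻¹).mulVec v

/-- The (possibly randomized) level-`α` randomization test `φ` built from the `n!`
permuted values `vals` and the observed statistic `obs`: with `r = n! - ⌊n!α⌋`, `t` the
`r`-th order statistic of `vals`, `N⁺ = #{vals > t}`, `N⁰ = #{vals = t}`,
`a = (n!α - N⁺)/N⁰`, the test is `1` if `obs > t`, `a` if `obs = t`, `0` otherwise. -/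
noncomputable def randTest (n : ℕ) (α : ℝ) (vals : Equiv.Perm (Fin n) → ℝ)
    (obs : ℝ) : ℝ :=
  let N := Nat.factorial n
  let r : ℕ := N - (⌊(N : ℝ) * α⌋).toNat
  let t : ℝ := sInf {x : ℝ | r ≤ (Finset.univ.filter (fun π : Equiv.Perm (Fin n) => vals π ≤ x)).card}
  let Nplus : ℕ := (Finset.univ.filter (fun π : Equiv.Perm (Fin n) => t < vals π)).card
  let N0 : ℕ := (Finset.univ.filter (fun π : Equiv.Perm (Fin n) => vals π = t)).card
  let a : ℝ := ((N : ℝ) * α - (Nplus : ℝ)) / (N0 : ℝ)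
  if t < obs then 1 else if obs = t then a else 0

/-! ### Auxiliary lemmas -/

section MeasAux
variable {γ : Type*} [MeasurableSpace γ]

lemma meas_entry_mul {a b c : ℕ} {f : γ → Matrix (Fin a) (Fin b) ℝ} {g : γ → Matrix (Fin b) (Fin c) ℝ}
    (hf : ∀ i j, Measurable fun q => f q i j) (hg : ∀ i j, Measurable fun q => g q i j) :
    ∀ i j, Measurable fun q => (f q * g q) i j := by
  intro i j
  simp only [Matrix.mul_apply]
  exact Finset.measurable_sum _ fun l _ => (hf i l).mul (hg l j)

lemma meas_det {a : ℕ} {f : γ → Matrix (Fin a) (Fin a) ℝ}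
    (hf : ∀ i j, Measurable fun q => f q i j) :
    Measurable fun q => (f q).det := by
  simp only [Matrix.det_apply, Units.smul_def, zsmul_eq_mul]
  exact Finset.measurable_sum _ fun σ _ =>
    ((Finset.measurable_prod _ fun i _ => hf (σ i) i).const_mul _)

lemma meas_adjugate {a : ℕ} {f : γ → Matrix (Fin a) (Fin a) ℝ}
    (hf : ∀ i j, Measurable fun q => f q i j) :
    ∀ i j, Measurable fun q => (f q).adjugate i j := by
  intro i j
  simp only [Matrix.adjugate_apply]
  apply meas_det
  intro i' j'
  simp only [Matrix.updateRow_apply]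
  split_ifs
  · exact measurable_const
  · exact hf i' j'

lemma meas_inv {a : ℕ} {f : γ → Matrix (Fin a) (Fin a) ℝ}
    (hf : ∀ i j, Measurable fun q => f q i j) :
    ∀ i j, Measurable fun q => (f q)⁻¹ i j := by
  intro i j
  simp only [Matrix.inv_def, Ring.inverse_eq_inv, Matrix.smul_apply, smul_eq_mul]
  exact ((meas_det hf).inv).mul (meas_adjugate hf i j)

lemma meas_mulVec {a b : ℕ} {f : γ → Matrix (Fin a) (Fin b) ℝ} {g : γ → Fin b → ℝ}
    (hf : ∀ i j, Measurable fun q => f q i j) (hg : ∀ j, Measurable fun q => g q j) :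
    ∀ i, Measurable fun q => (f q).mulVec (g q) i := by
  intro i
  simp only [Matrix.mulVec, dotProduct]
  exact Finset.measurable_sum _ fun l _ => (hf i l).mul (hg l)

lemma meas_dot {a : ℕ} {g h : γ → Fin a → ℝ}
    (hg : ∀ j, Measurable fun q => g q j) (hh : ∀ j, Measurable fun q => h q j) :
    Measurable fun q => (g q) ⬝ᵥ (h q) := by
  simp only [dotProduct]
  exact Finset.measurable_sum _ fun l _ => (hg l).mul (hh l)

end MeasAux

/-- The sample-space for `(W, (X, u))`. -/
abbrev Gam (n k p : ℕ) := (Fin n → Fin k → ℝ) × ((Fin n → Fin p → ℝ) × (Fin n → ℝ))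

noncomputable def ARfun (n k p : ℕ) : Gam n k p → ℝ :=
  fun q => ARstat (Matrix.of q.1) (Matrix.of q.2.1) q.2.2

lemma measurable_ARfun (n k p : ℕ) : Measurable (ARfun n k p) := by
  have hW : ∀ i j, Measurable fun q : Gam n k p => q.1 i j := fun i j =>
    (measurable_pi_apply j).comp ((measurable_pi_apply i).comp measurable_fst)
  have hX : ∀ i j, Measurable fun q : Gam n k p => q.2.1 i j := fun i j =>
    (measurable_pi_apply j).comp ((measurable_pi_apply i).comp (measurable_fst.comp measurable_snd))
  have hu : ∀ i, Measurable fun q : Gam n k p => q.2.2 i := fun i =>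
    (measurable_pi_apply i).comp (measurable_snd.comp measurable_snd)
  have hXm : ∀ i j, Measurable fun q : Gam n k p => (Matrix.of q.2.1 : Matrix (Fin n) (Fin p) ℝ) i j := hX
  have hXt : ∀ i j, Measurable fun q : Gam n k p => (Matrix.of q.2.1 : Matrix (Fin n) (Fin p) ℝ)ᵀ i j :=
    fun i j => hX j i
  have hinv := meas_inv (meas_entry_mul hXt hXm)
  have hM : ∀ i j, Measurable fun q : Gam n k p => projPerp (Matrix.of q.2.1) i j := by
    intro i j
    have h2 := meas_entry_mul (meas_entry_mul hXm hinv) hXt i j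
    unfold projPerp
    simp only [Matrix.sub_apply]
    exact measurable_const.sub h2
  have hut := meas_mulVec hM hu
  have hWt : ∀ i j, Measurable fun q : Gam n k p => (Matrix.of q.1 : Matrix (Fin n) (Fin k) ℝ)ᵀ i j :=
    fun i j => hW j i
  have hB := meas_entry_mul hWt hM
  have hv := meas_mulVec hB hut
  have hD : ∀ i j, Measurable fun q : Gam n k p =>
      (Matrix.diagonal (fun i' => ((fun l => ((projPerp (Matrix.of q.2.1)).mulVec q.2.2) l) i') ^ 2) : Matrix (Fin n) (Fin n) ℝ) i j := by
    intro i j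
    simp only [Matrix.diagonal_apply]
    split_ifs
    · exact (hut i).pow_const 2
    · exact measurable_const
  have hBt : ∀ i j, Measurable fun q : Gam n k p =>
      ((Matrix.of q.1 : Matrix (Fin n) (Fin k) ℝ)ᵀ * projPerp (Matrix.of q.2.1))ᵀ i j := fun i j => hB j i
  have hC := meas_inv (meas_entry_mul (meas_entry_mul hB hD) hBt)
  exact meas_dot hv (meas_mulVec hC hv)

lemma card_univ_perm (n : ℕ) : (Finset.univ : Finset (Equiv.Perm (Fin n))).card = Nat.factorial n := by
  simp [Finset.card_univ, Fintype.card_perm, Fintype.card_fin]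
/-- Attainment of the `r`-th order statistic and characterization of `sInf`. -/
lemma attain (n r : ℕ) (vals : Equiv.Perm (Fin n) → ℝ) (hr1 : 1 ≤ r) (hrN : r ≤ Nat.factorial n) :
    (∃ π, vals π = sInf {x : ℝ | r ≤ (Finset.univ.filter (fun π : Equiv.Perm (Fin n) => vals π ≤ x)).card}) ∧
    (∀ c : ℝ, sInf {x : ℝ | r ≤ (Finset.univ.filter (fun π : Equiv.Perm (Fin n) => vals π ≤ x)).card} ≤ c
      ↔ r ≤ (Finset.univ.filter (fun π : Equiv.Perm (Fin n) => vals π ≤ c)).card) := by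
  classical
  have hne : (Finset.univ : Finset (Equiv.Perm (Fin n))).Nonempty := ⟨1, Finset.mem_univ 1⟩
  have hmono : ∀ x y : ℝ, x ≤ y →
      (Finset.univ.filter (fun π : Equiv.Perm (Fin n) => vals π ≤ x)).card ≤
      (Finset.univ.filter (fun π : Equiv.Perm (Fin n) => vals π ≤ y)).card := by
    intro x y hxy
    apply Finset.card_le_card
    intro π hπ
    rw [Finset.mem_filter] at hπ ⊢
    exact ⟨hπ.1, hπ.2.trans hxy⟩
  have hFne : (Finset.univ.image vals).Nonempty := hne.image vals
  set F := Finset.univ.image vals with hF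
  have hcntmax : (Finset.univ.filter (fun π : Equiv.Perm (Fin n) => vals π ≤ F.max' hFne)).card
      = Nat.factorial n := by
    rw [Finset.filter_true_of_mem, card_univ_perm]
    intro π _
    exact F.le_max' _ (Finset.mem_image_of_mem vals (Finset.mem_univ π))
  set G := F.filter (fun y => r ≤ (Finset.univ.filter (fun π : Equiv.Perm (Fin n) => vals π ≤ y)).card) with hG
  have hGne : G.Nonempty := ⟨F.max' hFne, by
    rw [hG, Finset.mem_filter]
    exact ⟨F.max'_mem hFne, by rw [hcntmax]; exact hrN⟩⟩
  set t₀ := G.min' hGne with ht₀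
  have ht₀mem : t₀ ∈ G := G.min'_mem hGne
  obtain ⟨ht₀F, ht₀cnt⟩ := Finset.mem_filter.mp ht₀mem
  have hlb : ∀ x : ℝ, r ≤ (Finset.univ.filter (fun π : Equiv.Perm (Fin n) => vals π ≤ x)).card → t₀ ≤ x := by
    intro x hx
    have hfilne : (Finset.univ.filter (fun π : Equiv.Perm (Fin n) => vals π ≤ x)).Nonempty :=
      Finset.card_pos.mp (lt_of_lt_of_le hr1 hx)
    have hF'ne : ((Finset.univ.filter (fun π : Equiv.Perm (Fin n) => vals π ≤ x)).image vals).Nonempty :=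
      hfilne.image vals
    set F' := (Finset.univ.filter (fun π : Equiv.Perm (Fin n) => vals π ≤ x)).image vals with hF'
    set y := F'.max' hF'ne with hy
    have hymem : y ∈ F' := F'.max'_mem hF'ne
    obtain ⟨π₁, hπ₁, hπ₁y⟩ := Finset.mem_image.mp hymem
    rw [Finset.mem_filter] at hπ₁
    have hyx : y ≤ x := hπ₁y ▸ hπ₁.2
    have hsub : (Finset.univ.filter (fun π : Equiv.Perm (Fin n) => vals π ≤ x)) ⊆
        (Finset.univ.filter (fun π : Equiv.Perm (Fin n) => vals π ≤ y)) := by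
      intro π hπ
      rw [Finset.mem_filter] at hπ ⊢
      exact ⟨hπ.1, F'.le_max' _ (Finset.mem_image_of_mem vals (by rw [Finset.mem_filter]; exact hπ))⟩
    have hycnt : r ≤ (Finset.univ.filter (fun π : Equiv.Perm (Fin n) => vals π ≤ y)).card :=
      hx.trans (Finset.card_le_card hsub)
    have hyG : y ∈ G := by
      rw [hG, Finset.mem_filter]
      exact ⟨by rw [hF]; exact hπ₁y ▸ Finset.mem_image_of_mem vals (Finset.mem_univ π₁), hycnt⟩
    exact (G.min'_le _ hyG).trans hyx
  have hSet : sInf {x : ℝ | r ≤ (Finset.univ.filter (fun π : Equiv.Perm (Fin n) => vals π ≤ x)).card} = t₀ := by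
    apply le_antisymm
    · exact csInf_le ⟨t₀, fun x hx => hlb x hx⟩ ht₀cnt
    · exact le_csInf ⟨t₀, ht₀cnt⟩ (fun x hx => hlb x hx)
  constructor
  · obtain ⟨π, _, hπ⟩ := Finset.mem_image.mp ht₀F
    exact ⟨π, by rw [hSet]; exact hπ⟩
  · intro c
    rw [hSet]
    exact ⟨fun h => ht₀cnt.trans (hmono _ _ h), hlb c⟩

/-- The fundamental sum identity: the sum of the randomization test over all permuted
observed values equals `n! ⬝ α`. -/
lemma sum_randTest (n : ℕ) {α : ℝ} (hα0 : 0 < α) (hα1 : α < 1) (vals : Equiv.Perm (Fin n) → ℝ) :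
    ∑ π : Equiv.Perm (Fin n), randTest n α vals (vals π) = (Nat.factorial n : ℝ) * α := by
  classical
  have hNpos : 0 < Nat.factorial n := Nat.factorial_pos n
  have hNpos' : (0:ℝ) < (Nat.factorial n : ℝ) := by exact_mod_cast hNpos
  have hfl : ⌊(Nat.factorial n : ℝ) * α⌋ < (Nat.factorial n : ℤ) := by
    rw [Int.floor_lt]
    push_cast
    nlinarith
  have hfl0 : (0:ℤ) ≤ ⌊(Nat.factorial n : ℝ) * α⌋ := by
    apply Int.floor_nonneg.mpr
    positivity
  set r : ℕ := Nat.factorial n - (⌊(Nat.factorial n : ℝ) * α⌋).toNat with hrdef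
  have hr1 : 1 ≤ r := by omega
  have hrN : r ≤ Nat.factorial n := by omega
  obtain ⟨⟨π₀, hπ₀⟩, _⟩ := attain n r vals hr1 hrN
  set t : ℝ := sInf {x : ℝ | r ≤ (Finset.univ.filter (fun π : Equiv.Perm (Fin n) => vals π ≤ x)).card} with htdef
  set Np : ℕ := (Finset.univ.filter (fun π : Equiv.Perm (Fin n) => t < vals π)).card with hNpdef
  set N0 : ℕ := (Finset.univ.filter (fun π : Equiv.Perm (Fin n) => vals π = t)).card with hN0def
  set a : ℝ := ((Nat.factorial n : ℝ) * α - (Np : ℝ)) / (N0 : ℝ) with hadef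
  have hN0pos : 0 < N0 := by
    rw [hN0def]
    apply Finset.card_pos.mpr
    exact ⟨π₀, by rw [Finset.mem_filter]; exact ⟨Finset.mem_univ _, hπ₀⟩⟩
  have hsummand : ∀ obs : ℝ, randTest n α vals obs = if t < obs then 1 else if obs = t then a else 0 := by
    intro obs; rfl
  calc ∑ π : Equiv.Perm (Fin n), randTest n α vals (vals π)
      = ∑ π : Equiv.Perm (Fin n),
          ((if t < vals π then (1:ℝ) else 0) + (if vals π = t then a else 0)) := by
        apply Finset.sum_congr rfl
        intro π _
        rw [hsummand]
        rcases lt_trichotomy (vals π) t with h | h | h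
        · simp [h.ne, not_lt.mpr h.le]
        · simp [h, not_lt.mpr h.le]
        · simp [h, h.ne']
    _ = (Np : ℝ) * 1 + (N0 : ℝ) * a := by
        rw [Finset.sum_add_distrib, ← Finset.sum_filter, ← Finset.sum_filter,
          Finset.sum_const, Finset.sum_const, nsmul_eq_mul, nsmul_eq_mul]
    _ = (Nat.factorial n : ℝ) * α := by
        rw [hadef, mul_div_cancel₀]
        · ring
        · exact_mod_cast hN0pos.ne'

/-- The randomization test is bounded. -/
lemma abs_randTest_le (n : ℕ) {α : ℝ} (hα0 : 0 < α) (hα1 : α < 1)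
    (vals : Equiv.Perm (Fin n) → ℝ) (obs : ℝ) :
    |randTest n α vals obs| ≤ 2 * (Nat.factorial n : ℝ) := by
  classical
  have hN1 : (1:ℝ) ≤ (Nat.factorial n : ℝ) := by exact_mod_cast (Nat.factorial_pos n)
  set t : ℝ := sInf {x : ℝ | Nat.factorial n - (⌊(Nat.factorial n : ℝ) * α⌋).toNat ≤ (Finset.univ.filter (fun π : Equiv.Perm (Fin n) => vals π ≤ x)).card} with htdef
  set Np : ℕ := (Finset.univ.filter (fun π : Equiv.Perm (Fin n) => t < vals π)).card with hNpdef
  set N0 : ℕ := (Finset.univ.filter (fun π : Equiv.Perm (Fin n) => vals π = t)).card with hN0def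
  set a : ℝ := ((Nat.factorial n : ℝ) * α - (Np : ℝ)) / (N0 : ℝ) with hadef
  have hrT : randTest n α vals obs = if t < obs then 1 else if obs = t then a else 0 := rfl
  rw [hrT]
  have hNp_le : (Np : ℝ) ≤ (Nat.factorial n : ℝ) := by
    have : Np ≤ Nat.factorial n := by
      rw [hNpdef, ← card_univ_perm n]
      exact Finset.card_filter_le _ _
    exact_mod_cast this
  have hNp0 : (0:ℝ) ≤ (Np : ℝ) := Nat.cast_nonneg _
  split_ifs with h1 h2
  · rw [abs_one]; linarith
  · rcases Nat.eq_zero_or_pos N0 with h0 | h0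
    · have ha0 : a = 0 := by rw [hadef, h0]; simp
      rw [ha0, abs_zero]; linarith
    · have h01 : (1:ℝ) ≤ (N0 : ℝ) := by exact_mod_cast h0
      have habs : |a| ≤ |(Nat.factorial n : ℝ) * α - (Np : ℝ)| := by
        rw [hadef, abs_div, abs_of_nonneg (by positivity : (0:ℝ) ≤ (N0:ℝ))]
        calc |(Nat.factorial n : ℝ) * α - (Np : ℝ)| / (N0 : ℝ)
            ≤ |(Nat.factorial n : ℝ) * α - (Np : ℝ)| / 1 := by
              apply div_le_div_of_nonneg_left (abs_nonneg _) one_pos h01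
          _ = _ := div_one _
      have : |(Nat.factorial n : ℝ) * α - (Np : ℝ)| ≤ 2 * (Nat.factorial n : ℝ) := by
        rw [abs_le]
        constructor <;> nlinarith
      linarith
  · rw [abs_zero]; linarith

lemma card_filter_comp {n : ℕ} (e : Equiv.Perm (Fin n) ≃ Equiv.Perm (Fin n))
    (p : Equiv.Perm (Fin n) → Prop) [DecidablePred p] :
    (Finset.univ.filter fun π => p (e π)).card = (Finset.univ.filter p).card := by
  apply Finset.card_bij' (fun π _ => e π) (fun π _ => e.symm π)
  · intro π hπ
    rw [Finset.mem_filter] at hπ ⊢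
    exact ⟨Finset.mem_univ _, hπ.2⟩
  · intro π hπ
    rw [Finset.mem_filter] at hπ ⊢
    refine ⟨Finset.mem_univ _, ?_⟩
    rw [Equiv.apply_symm_apply]
    exact hπ.2
  · intro π _; exact e.symm_apply_apply π
  · intro π _; exact e.apply_symm_apply π

/-- The randomization test only depends on the multiset of values. -/
lemma randTest_comp (n : ℕ) (α : ℝ) (vals : Equiv.Perm (Fin n) → ℝ)
    (e : Equiv.Perm (Fin n) ≃ Equiv.Perm (Fin n)) (obs : ℝ) :
    randTest n α (fun π => vals (e π)) obs = randTest n α vals obs := by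
  classical
  unfold randTest
  have hset : {x : ℝ | Nat.factorial n - (⌊(Nat.factorial n : ℝ) * α⌋).toNat ≤ (Finset.univ.filter (fun π : Equiv.Perm (Fin n) => vals (e π) ≤ x)).card}
      = {x : ℝ | Nat.factorial n - (⌊(Nat.factorial n : ℝ) * α⌋).toNat ≤ (Finset.univ.filter (fun π : Equiv.Perm (Fin n) => vals π ≤ x)).card} := by
    ext x
    simp only [Set.mem_setOf_eq]
    rw [card_filter_comp e (fun π => vals π ≤ x)]
  simp only [hset]
  set t := sInf {x : ℝ | Nat.factorial n - (⌊(Nat.factorial n : ℝ) * α⌋).toNat ≤ (Finset.univ.filter (fun π : Equiv.Perm (Fin n) => vals π ≤ x)).card} with ht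
  rw [card_filter_comp e (fun π => t < vals π), card_filter_comp e (fun π => vals π = t)]
section RandTestMeas
variable {γ : Type*} [MeasurableSpace γ]

lemma measurable_cnt {n : ℕ} {vals : γ → Equiv.Perm (Fin n) → ℝ}
    (hvals : ∀ π, Measurable fun q => vals q π) (c : ℝ) :
    Measurable fun q => (Finset.univ.filter (fun π : Equiv.Perm (Fin n) => vals q π ≤ c)).card := by
  classical
  have : (fun q => (Finset.univ.filter (fun π : Equiv.Perm (Fin n) => vals q π ≤ c)).card)
      = fun q => ∑ π : Equiv.Perm (Fin n), if vals q π ≤ c then 1 else 0 := by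
    funext q
    rw [Finset.card_filter]
  rw [this]
  exact Finset.measurable_sum _ fun π _ =>
    Measurable.ite (measurableSet_le (hvals π) measurable_const) measurable_const measurable_const

lemma measurable_tstat {n r : ℕ} (hr1 : 1 ≤ r) (hrN : r ≤ Nat.factorial n)
    {vals : γ → Equiv.Perm (Fin n) → ℝ} (hvals : ∀ π, Measurable fun q => vals q π) :
    Measurable fun q =>
      sInf {x : ℝ | r ≤ (Finset.univ.filter (fun π : Equiv.Perm (Fin n) => vals q π ≤ x)).card} := by
  apply measurable_of_Iic
  intro c
  have h1 : (fun q => sInf {x : ℝ | r ≤ (Finset.univ.filter (fun π : Equiv.Perm (Fin n) => vals q π ≤ x)).card}) ⁻¹' Set.Iic c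
      = {q | r ≤ (Finset.univ.filter (fun π : Equiv.Perm (Fin n) => vals q π ≤ c)).card} := by
    ext q
    simp only [Set.mem_preimage, Set.mem_Iic, Set.mem_setOf_eq]
    exact (attain n r (vals q) hr1 hrN).2 c
  rw [h1]
  have h2 : {q | r ≤ (Finset.univ.filter (fun π : Equiv.Perm (Fin n) => vals q π ≤ c)).card}
      = (fun q => (Finset.univ.filter (fun π : Equiv.Perm (Fin n) => vals q π ≤ c)).card) ⁻¹' (Set.Ici r) := rfl
  rw [h2]
  exact measurable_cnt hvals c MeasurableSpace.measurableSet_top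

lemma measurable_randTest {n : ℕ} {α : ℝ} (hα0 : 0 < α) (hα1 : α < 1)
    {vals : γ → Equiv.Perm (Fin n) → ℝ} (hvals : ∀ π, Measurable fun q => vals q π)
    {obs : γ → ℝ} (hobs : Measurable obs) :
    Measurable fun q => randTest n α (vals q) (obs q) := by
  classical
  have hNpos : 0 < Nat.factorial n := Nat.factorial_pos n
  have hNpos' : (0:ℝ) < (Nat.factorial n : ℝ) := by exact_mod_cast hNpos
  have hfl : ⌊(Nat.factorial n : ℝ) * α⌋ < (Nat.factorial n : ℤ) := by
    rw [Int.floor_lt]; push_cast; nlinarith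
  have hfl0 : (0:ℤ) ≤ ⌊(Nat.factorial n : ℝ) * α⌋ := Int.floor_nonneg.mpr (by positivity)
  set r : ℕ := Nat.factorial n - (⌊(Nat.factorial n : ℝ) * α⌋).toNat with hrdef
  have hr1 : 1 ≤ r := by omega
  have hrN : r ≤ Nat.factorial n := by omega
  set tF : γ → ℝ := fun q =>
    sInf {x : ℝ | r ≤ (Finset.univ.filter (fun π : Equiv.Perm (Fin n) => vals q π ≤ x)).card} with htF
  have htFmeas : Measurable tF := measurable_tstat hr1 hrN hvals
  set NpF : γ → ℕ := fun q => (Finset.univ.filter (fun π : Equiv.Perm (Fin n) => tF q < vals q π)).card with hNpF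
  set N0F : γ → ℕ := fun q => (Finset.univ.filter (fun π : Equiv.Perm (Fin n) => vals q π = tF q)).card with hN0F
  have hNpFmeas : Measurable NpF := by
    have : NpF = fun q => ∑ π : Equiv.Perm (Fin n), if tF q < vals q π then 1 else 0 := by
      funext q
      show (Finset.univ.filter (fun π : Equiv.Perm (Fin n) => tF q < vals q π)).card = _
      rw [Finset.card_filter]
    rw [this]
    exact Finset.measurable_sum _ fun π _ =>
      Measurable.ite (measurableSet_lt htFmeas (hvals π)) measurable_const measurable_const
  have hN0Fmeas : Measurable N0F := by
    have : N0F = fun q => ∑ π : Equiv.Perm (Fin n), if vals q π = tF q then 1 else 0 := by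
      funext q
      show (Finset.univ.filter (fun π : Equiv.Perm (Fin n) => vals q π = tF q)).card = _
      rw [Finset.card_filter]
    rw [this]
    exact Finset.measurable_sum _ fun π _ =>
      Measurable.ite (measurableSet_eq_fun (hvals π) htFmeas) measurable_const measurable_const
  set aF : γ → ℝ := fun q => ((Nat.factorial n : ℝ) * α - (NpF q : ℝ)) / (N0F q : ℝ) with haF
  have haFmeas : Measurable aF := by
    apply Measurable.div
    · exact measurable_const.sub (measurable_from_top.comp hNpFmeas)
    · exact measurable_from_top.comp hN0Fmeas
  have hfinal : (fun q => randTest n α (vals q) (obs q))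
      = fun q => if tF q < obs q then 1 else if obs q = tF q then aF q else 0 := rfl
  rw [hfinal]
  exact Measurable.ite (measurableSet_lt htFmeas hobs) measurable_const
    (Measurable.ite (measurableSet_eq_fun hobs htFmeas) haFmeas measurable_const)

end RandTestMeas

section DistAux
variable {Ω : Type*} [MeasurableSpace Ω]

lemma map_W_eq_pi {n k : ℕ} (P : Measure Ω) [IsProbabilityMeasure P]
    (W : Ω → Fin n → Fin k → ℝ) (hWmeas : Measurable W)
    (hiind : iIndepFun (fun i ω => W ω i) P) :
    Measure.map W P = Measure.pi (fun i => Measure.map (fun ω => W ω i) P) := by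
  have hWi : ∀ i, Measurable fun ω => W ω i := fun i => (measurable_pi_apply i).comp hWmeas
  haveI : ∀ i, IsProbabilityMeasure (Measure.map (fun ω => W ω i) P) :=
    fun i => Measure.isProbabilityMeasure_map (hWi i).aemeasurable
  symm
  apply Measure.pi_eq
  intro s hs
  rw [Measure.map_apply hWmeas (MeasurableSet.univ_pi hs)]
  have hpre : W ⁻¹' (Set.univ.pi s) = ⋂ i ∈ Finset.univ, (fun ω => W ω i) ⁻¹' (s i) := by
    ext ω
    simp [Set.mem_pi]
  rw [hpre, hiind.measure_inter_preimage_eq_mul Finset.univ (fun i _ => hs i)]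
  exact Finset.prod_congr rfl fun i _ => (Measure.map_apply (hWi i) (hs i)).symm

lemma map_Wperm_eq {n k : ℕ} (P : Measure Ω) [IsProbabilityMeasure P]
    (W : Ω → Fin n → Fin k → ℝ) (hWmeas : Measurable W)
    (hid : ∀ i j : Fin n, IdentDistrib (fun ω => W ω i) (fun ω => W ω j) P P)
    (hiind : iIndepFun (fun i ω => W ω i) P)
    (π : Equiv.Perm (Fin n)) :
    Measure.map (fun ω => fun i => W ω (π i)) P = Measure.map W P := by
  have hWi : ∀ i, Measurable fun ω => W ω i := fun i => (measurable_pi_apply i).comp hWmeas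
  haveI hprob : ∀ i, IsProbabilityMeasure (Measure.map (fun ω => W ω i) P) :=
    fun i => Measure.isProbabilityMeasure_map (hWi i).aemeasurable
  have hg : Measurable (fun (w : Fin n → Fin k → ℝ) i => w (π i)) :=
    measurable_pi_lambda _ fun i => measurable_pi_apply (π i)
  have hcomp : (fun ω => fun i => W ω (π i)) = (fun (w : Fin n → Fin k → ℝ) i => w (π i)) ∘ W := rfl
  rw [hcomp, ← Measure.map_map hg hWmeas, map_W_eq_pi P W hWmeas hiind]
  symm
  apply Measure.pi_eq
  intro s hs
  rw [Measure.map_apply hg (MeasurableSet.univ_pi hs)]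
  have hpre : (fun (w : Fin n → Fin k → ℝ) i => w (π i)) ⁻¹' (Set.univ.pi s)
      = Set.univ.pi (fun i => s (π.symm i)) := by
    ext w
    simp only [Set.mem_preimage, Set.mem_pi, Set.mem_univ, true_implies]
    constructor
    · intro h j
      have := h (π.symm j)
      rwa [Equiv.apply_symm_apply] at this
    · intro h i
      have := h (π i)
      rwa [Equiv.symm_apply_apply] at this
  rw [hpre, Measure.pi_pi]
  calc ∏ i : Fin n, Measure.map (fun ω => W ω i) P (s (π.symm i))
      = ∏ i : Fin n, Measure.map (fun ω => W ω (π.symm i)) P (s (π.symm i)) :=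
        Finset.prod_congr rfl fun i _ => by rw [(hid i (π.symm i)).map_eq]
    _ = ∏ i : Fin n, Measure.map (fun ω => W ω i) P (s i) :=
        Equiv.prod_comp π.symm (fun i => Measure.map (fun ω => W ω i) P (s i))

lemma map_joint_eq {n k : ℕ} {E : Type*} [MeasurableSpace E] (P : Measure Ω) [IsProbabilityMeasure P]
    (W : Ω → Fin n → Fin k → ℝ) (Z : Ω → E)
    (hWmeas : Measurable W) (hZmeas : Measurable Z)
    (hid : ∀ i j : Fin n, IdentDistrib (fun ω => W ω i) (fun ω => W ω j) P P)
    (hiind : iIndepFun (fun i ω => W ω i) P)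
    (hindep : IndepFun W Z P)
    (π : Equiv.Perm (Fin n)) :
    Measure.map (fun ω => ((fun i => W ω (π i)), Z ω)) P
      = Measure.map (fun ω => (W ω, Z ω)) P := by
  have hg : Measurable (fun (w : Fin n → Fin k → ℝ) i => w (π i)) :=
    measurable_pi_lambda _ fun i => measurable_pi_apply (π i)
  have hWπ : Measurable (fun ω => fun i => W ω (π i)) := hg.comp hWmeas
  have hindep' : IndepFun (fun ω => fun i => W ω (π i)) Z P :=
    hindep.comp hg measurable_id
  rw [(indepFun_iff_map_prod_eq_prod_map_map hWπ.aemeasurable hZmeas.aemeasurable).mp hindep',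
    (indepFun_iff_map_prod_eq_prod_map_map hWmeas.aemeasurable hZmeas.aemeasurable).mp hindep,
    map_Wperm_eq P W hWmeas hid hiind π]

end DistAux
/-- Exactness of the permutation AR test `PAR₁` obtained by permuting the rows of the
instrument matrix `W`: if the rows of `W` are i.i.d. and `W` is independent of `(X, u)`
(`X` containing an intercept column), then under the null the statistic has the same
distribution after any fixed row permutation of `W`, and the randomization test has
exact size `α`. -/
theorem stmt4 {Ω : Type*} [MeasurableSpace Ω] (P : Measure Ω) [IsProbabilityMeasure P]
    (n k p : ℕ) (hp : 0 < p)
    (W : Ω → Fin n → Fin k → ℝ) (X : Ω → Fin n → Fin p → ℝ) (u : Ω → Fin n → ℝ)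
    (hWmeas : Measurable W) (hXumeas : Measurable fun ω => (X ω, u ω))
    (hint : ∀ ω i, X ω i ⟨0, hp⟩ = 1)
    (hid : ∀ i j : Fin n, IdentDistrib (fun ω => W ω i) (fun ω => W ω j) P P)
    (hiind : iIndepFun (fun i ω => W ω i) P)
    (hindep : IndepFun W (fun ω => (X ω, u ω)) P)
    (α : ℝ) (hα : α ∈ Set.Ioo (0 : ℝ) 1) :
    (∀ π : Equiv.Perm (Fin n),
        Measure.map (fun ω => ARstat (Matrix.of fun i j => W ω (π i) j) (Matrix.of (X ω)) (u ω)) P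
          = Measure.map (fun ω => ARstat (Matrix.of fun i j => W ω i j) (Matrix.of (X ω)) (u ω)) P)
    ∧ ∫ ω, randTest n α
          (fun π => ARstat (Matrix.of fun i j => W ω (π i) j) (Matrix.of (X ω)) (u ω))
          (ARstat (Matrix.of fun i j => W ω i j) (Matrix.of (X ω)) (u ω)) ∂P = α := by
  classical
  obtain ⟨hα0, hα1⟩ := hα
  set Z : Ω → (Fin n → Fin p → ℝ) × (Fin n → ℝ) := fun ω => (X ω, u ω) with hZ
  have hZmeas : Measurable Z := hXumeas
  have hAR : Measurable (ARfun n k p) := measurable_ARfun n k p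
  have hjmeas : ∀ π : Equiv.Perm (Fin n),
      Measurable (fun ω => ((fun i => W ω (π i)), Z ω) : Ω → Gam n k p) := by
    intro π
    exact ((measurable_pi_lambda _ fun i => (measurable_pi_apply (π i)).comp hWmeas)).prodMk hZmeas
  have hj0meas : Measurable (fun ω => (W ω, Z ω) : Ω → Gam n k p) := hWmeas.prodMk hZmeas
  have hmapeq : ∀ π : Equiv.Perm (Fin n),
      Measure.map (fun ω => ((fun i => W ω (π i)), Z ω) : Ω → Gam n k p) P
        = Measure.map (fun ω => (W ω, Z ω) : Ω → Gam n k p) P :=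
    fun π => map_joint_eq P W Z hWmeas hZmeas hid hiind hindep π
  -- Part 1
  have part1 : ∀ π : Equiv.Perm (Fin n),
      Measure.map (fun ω => ARstat (Matrix.of fun i j => W ω (π i) j) (Matrix.of (X ω)) (u ω)) P
        = Measure.map (fun ω => ARstat (Matrix.of fun i j => W ω i j) (Matrix.of (X ω)) (u ω)) P := by
    intro π
    have e1 : (fun ω => ARstat (Matrix.of fun i j => W ω (π i) j) (Matrix.of (X ω)) (u ω))
        = ARfun n k p ∘ (fun ω => ((fun i => W ω (π i)), Z ω)) := rfl
    have e2 : (fun ω => ARstat (Matrix.of fun i j => W ω i j) (Matrix.of (X ω)) (u ω))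
        = ARfun n k p ∘ (fun ω => (W ω, Z ω)) := rfl
    rw [e1, e2, ← Measure.map_map hAR (hjmeas π), ← Measure.map_map hAR hj0meas, hmapeq π]
  refine ⟨part1, ?_⟩
  -- Part 2
  set G1 : Gam n k p → ℝ := fun q =>
    randTest n α (fun π' => ARfun n k p ((fun i => q.1 (π' i)), q.2)) (ARfun n k p q) with hG1def
  have hvals : ∀ π' : Equiv.Perm (Fin n),
      Measurable fun q : Gam n k p => ARfun n k p ((fun i => q.1 (π' i)), q.2) := by
    intro π'
    apply hAR.comp
    exact (measurable_pi_lambda _ fun i =>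
      (measurable_pi_apply (π' i)).comp measurable_fst).prodMk measurable_snd
  have hG1meas : Measurable G1 :=
    measurable_randTest hα0 hα1 hvals hAR
  have hbound : ∀ q : Gam n k p, |G1 q| ≤ 2 * (Nat.factorial n : ℝ) :=
    fun q => abs_randTest_le n hα0 hα1 _ _
  -- pointwise reindexing identity
  have key : ∀ (q : Gam n k p) (π : Equiv.Perm (Fin n)),
      G1 ((fun i => q.1 (π i)), q.2)
        = randTest n α (fun π' => ARfun n k p ((fun i => q.1 (π' i)), q.2))
            (ARfun n k p ((fun i => q.1 (π i)), q.2)) := by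
    intro q π
    show randTest n α
        (fun π' => ARfun n k p ((fun i => q.1 (π (π' i))), q.2))
        (ARfun n k p ((fun i => q.1 (π i)), q.2)) = _
    have hre : (fun π' => ARfun n k p ((fun i => q.1 (π (π' i))), q.2))
        = fun π' => (fun ρ => ARfun n k p ((fun i => q.1 (ρ i)), q.2)) ((Equiv.mulLeft π) π') := rfl
    rw [hre, randTest_comp n α (fun ρ => ARfun n k p ((fun i => q.1 (ρ i)), q.2)) (Equiv.mulLeft π)]
  -- integrability
  have hintegr : ∀ π : Equiv.Perm (Fin n),
      Integrable (fun ω => G1 ((fun i => W ω (π i)), Z ω)) P := by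
    intro π
    apply Integrable.mono' (integrable_const (2 * (Nat.factorial n : ℝ)))
    · exact (hG1meas.comp (hjmeas π)).aestronglyMeasurable
    · exact Filter.Eventually.of_forall fun ω => by
        simpa [Real.norm_eq_abs] using hbound ((fun i => W ω (π i)), Z ω)
  -- each permuted integral equals the original
  have hsame : ∀ π : Equiv.Perm (Fin n),
      ∫ ω, G1 ((fun i => W ω (π i)), Z ω) ∂P = ∫ ω, G1 (W ω, Z ω) ∂P := by
    intro π
    rw [← integral_map (hjmeas π).aemeasurable hG1meas.aestronglyMeasurable, hmapeq π,
      integral_map hj0meas.aemeasurable hG1meas.aestronglyMeasurable]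
  -- pointwise sum identity
  have hsum : ∀ ω, ∑ π : Equiv.Perm (Fin n), G1 ((fun i => W ω (π i)), Z ω)
      = (Nat.factorial n : ℝ) * α := by
    intro ω
    calc ∑ π : Equiv.Perm (Fin n), G1 ((fun i => W ω (π i)), Z ω)
        = ∑ π : Equiv.Perm (Fin n),
            randTest n α (fun π' => ARfun n k p ((fun i => W ω (π' i)), Z ω))
              (ARfun n k p ((fun i => W ω (π i)), Z ω)) :=
          Finset.sum_congr rfl fun π _ => key (W ω, Z ω) π
      _ = (Nat.factorial n : ℝ) * α :=
          sum_randTest n hα0 hα1 (fun π' => ARfun n k p ((fun i => W ω (π' i)), Z ω))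
  -- combine
  have hNsum : ∑ π : Equiv.Perm (Fin n), ∫ ω, G1 ((fun i => W ω (π i)), Z ω) ∂P
      = (Nat.factorial n : ℝ) * α := by
    rw [← integral_finset_sum _ (fun π _ => hintegr π)]
    have : (fun ω => ∑ π : Equiv.Perm (Fin n), G1 ((fun i => W ω (π i)), Z ω))
        = fun _ => (Nat.factorial n : ℝ) * α := funext hsum
    rw [this, integral_const]
    simp
  have hNsum' : (Nat.factorial n : ℝ) * ∫ ω, G1 (W ω, Z ω) ∂P = (Nat.factorial n : ℝ) * α := by
    rw [← hNsum]
    rw [Finset.sum_congr rfl (fun π _ => hsame π), Finset.sum_const, card_univ_perm,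
      nsmul_eq_mul]
  have hNne : (Nat.factorial n : ℝ) ≠ 0 := by
    exact_mod_cast (Nat.factorial_pos n).ne'
  have hfin : ∫ ω, G1 (W ω, Z ω) ∂P = α := mul_left_cancel₀ hNne hNsum'
  exact hfin
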